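/- Let F be a field, g ∈ F[x] a polynomial that is constant on each block of a partition A_1 ∪ ... ∪ A_m of a set Ā ⊆ F, with |A_j| = r+1 for all j, and suppose deg g = r+1. Let f(x) = Σ_{i=0}^{r-1} f_i(x)·x^i where each f_i is a polynomial in g (i.e., f_i(x) = F_i(g(x)) for some F_i ∈ F[x]). Then for each block A_j, the restriction of f to A_j agrees with a polynomial of degree at most r-1; consequently, for any α ∈ A_j, f(α) is determined by the values {f(β) : β ∈ A_j, β ≠ α} via polynomial interpolation. -/
import Mathlib


open Polynomial Finset

/-- Locality of Tamo–Barg codes: if `g` is constant on each block `A j` of size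
`r+1` and `f = Σ_{i<r} Fc i (g x) · x^i`, then on each block `f` agrees with a
polynomial of degree `< r`; consequently the value of such an `f` at any point
of a block is determined by its values at the other `r` points of the block. -/
theorem tamo_barg_locality
    {F : Type*} [Field F] {m r : ℕ} (hr : 0 < r)
    (A : Fin m → Finset F)
    (hdisj : ∀ i j : Fin m, i ≠ j → Disjoint (A i) (A j))
    (hAcard : ∀ j, (A j).card = r + 1)
    (g : Polynomial F) (hgdeg : g.degree = (r + 1 : ℕ))
    (hgconst : ∀ j : Fin m, ∀ a ∈ A j, ∀ b ∈ A j, g.eval a = g.eval b)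
    (Fc : Fin r → Polynomial F)
    (f : Polynomial F) (hf : f = ∑ i : Fin r, (Fc i).comp g * X ^ (i : ℕ)) :
    (∀ j : Fin m, ∃ p : Polynomial F, p.degree < (r : ℕ) ∧
      ∀ a ∈ A j, f.eval a = p.eval a) ∧
    (∀ Fc' : Fin r → Polynomial F,
      ∀ f' : Polynomial F, f' = ∑ i : Fin r, (Fc' i).comp g * X ^ (i : ℕ) →
      ∀ j : Fin m, ∀ α ∈ A j,
        (∀ β ∈ A j, β ≠ α → f.eval β = f'.eval β) → f.eval α = f'.eval α) := by
  classical
  have key : ∀ (Fc0 : Fin r → Polynomial F) (f0 : Polynomial F),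
      f0 = ∑ i : Fin r, (Fc0 i).comp g * X ^ (i : ℕ) →
      ∀ j : Fin m, ∃ p : Polynomial F, p.degree < (r : ℕ) ∧
        ∀ a ∈ A j, f0.eval a = p.eval a := by
    intro Fc0 f0 hf0 j
    have hne : (A j).Nonempty := by
      rw [← Finset.card_pos, hAcard j]; omega
    obtain ⟨a₀, ha₀⟩ := hne
    refine ⟨∑ i : Fin r, C ((Fc0 i).eval (g.eval a₀)) * X ^ (i : ℕ), ?_, ?_⟩
    · refine lt_of_le_of_lt (degree_sum_le _ _) ?_
      refine (Finset.sup_lt_iff (WithBot.bot_lt_coe r)).mpr fun i _ => ?_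
      exact lt_of_le_of_lt (degree_C_mul_X_pow_le _ _) (by exact_mod_cast i.2 : ((i:ℕ):WithBot ℕ) < (r:ℕ))
    · intro a ha
      rw [hf0, eval_finset_sum, eval_finset_sum]
      refine Finset.sum_congr rfl fun i _ => ?_
      simp [hgconst j a ha a₀ ha₀]
  refine ⟨key Fc f hf, ?_⟩
  intro Fc' f' hf' j α hα hagree
  obtain ⟨p, hpdeg, hp⟩ := key Fc f hf j
  obtain ⟨p', hpdeg', hp'⟩ := key Fc' f' hf' j
  have hq : p - p' = 0 := by
    rcases eq_or_ne (p - p') 0 with h | h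
    · exact h
    refine Polynomial.eq_zero_of_natDegree_lt_card_of_eval_eq_zero'
      (p - p') ((A j).erase α) (fun β hβ => ?_) ?_
    · obtain ⟨hβne, hβ⟩ := Finset.mem_erase.mp hβ
      have := hagree β hβ hβne
      rw [eval_sub, ← hp β hβ, ← hp' β hβ, this, sub_self]
    · rw [Finset.card_erase_of_mem hα, hAcard j]
      have := (natDegree_lt_iff_degree_lt h).mpr (lt_of_le_of_lt (degree_sub_le p p') (max_lt hpdeg hpdeg'))
      omega
  have : p.eval α = p'.eval α := by
    have := congrArg (Polynomial.eval α) hq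
    simpa [sub_eq_zero] using this
  rw [hp α hα, hp' α hα, this]
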